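/- For every signed permutation beta in B_n, the classifying signed permutation of the compact e-diagram D_beta = (g(beta), g~(beta)) is beta itself; i.e., beta(D_beta) = beta. -/

import Mathlib

open scoped Classical

/-- The hyperoctahedral group `B_n`, modeled as pairs (permutation, sign vector),
i.e. the wreath product `ℤ₂ ≀ S_n`.  `β.2 i = true` means the entry at position `i`
is negative. -/
abbrev HO (n : ℕ) := Equiv.Perm (Fin n) × (Fin n → Bool)

namespace HO

/-- The inverse signed permutation. -/
noncomputable def inv {n : ℕ} (β : HO n) : HO n := (β.1⁻¹, fun i => β.2 (β.1⁻¹ i))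

/-- One-line notation (1-indexed): the signed value `β(i) ∈ {±1,…,±n}` for `1 ≤ i ≤ n`,
and `0` outside this range. -/
noncomputable def val {n : ℕ} (β : HO n) (i : ℕ) : ℤ :=
  if h : 1 ≤ i ∧ i ≤ n then
    (if β.2 ⟨i - 1, by omega⟩ then -(((β.1 ⟨i - 1, by omega⟩ : Fin n) : ℕ) + 1 : ℤ)
     else (((β.1 ⟨i - 1, by omega⟩ : Fin n) : ℕ) + 1 : ℤ))
  else 0

/-- The order `-1 ≺ -2 ≺ ⋯ ≺ -n ≺ ⋯ ≺ 0 ≺ 1 ≺ 2 ≺ ⋯` on `ℤ`: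
`bprec a b` means `a ≺ b`. -/
noncomputable def bprec (a b : ℤ) : Prop :=
  (a < 0 ∧ b < 0 ∧ -a < -b) ∨ (a < 0 ∧ 0 ≤ b) ∨ (0 ≤ a ∧ 0 ≤ b ∧ a < b)

/-- Descent set of `β` with respect to the order `≺`. -/
noncomputable def Des {n : ℕ} (β : HO n) : Finset ℕ :=
  (Finset.Icc 1 (n - 1)).filter fun i => bprec (val β (i + 1)) (val β i)

/-- Rise set of `β` with respect to the order `≺`. -/
noncomputable def Ris {n : ℕ} (β : HO n) : Finset ℕ :=
  (Finset.Icc 1 (n - 1)).filter fun i => bprec (val β i) (val β (i + 1))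

/-- Major index. -/
noncomputable def maj {n : ℕ} (β : HO n) : ℕ := ∑ i ∈ Des β, i

/-- Number of negative entries. -/
noncomputable def neg {n : ℕ} (β : HO n) : ℕ :=
  ((Finset.Icc 1 n).filter fun i => val β i < 0).card

/-- The flag-major index `fmaj β = 2 maj β + neg β`. -/
noncomputable def fmaj {n : ℕ} (β : HO n) : ℕ := 2 * maj β + neg β

/-- `δ_i(β) = #{j ∈ Des(β) : j < i}`. -/
noncomputable def deltaStat {n : ℕ} (β : HO n) (i : ℕ) : ℕ := ((Des β).filter fun j => j < i).card

/-- `d_i(β) = #{j ∈ Des(β) : j ≥ i}`. -/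
noncomputable def dStat {n : ℕ} (β : HO n) (i : ℕ) : ℕ := ((Des β).filter fun j => i ≤ j).card

/-- `ε_i(β) = 1` if `β(i) < 0`, else `0`. -/
noncomputable def epsStat {n : ℕ} (β : HO n) (i : ℕ) : ℕ := if val β i < 0 then 1 else 0

/-- `η_i(β) = 1` if `β(i) > 0`, else `0`. -/
noncomputable def etaStat {n : ℕ} (β : HO n) (i : ℕ) : ℕ := if 0 < val β i then 1 else 0

/-- `g_i(β) = 2 δ_i(β) + η_i(β)`. -/
noncomputable def gstat {n : ℕ} (β : HO n) (i : ℕ) : ℕ := 2 * deltaStat β i + etaStat β i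

/-- `f_i(β) = 2 d_i(β) + ε_i(β)` (so that `fmaj β = ∑ f_i(β)`). -/
noncomputable def fStat {n : ℕ} (β : HO n) (i : ℕ) : ℕ := 2 * dStat β i + epsStat β i

/-- `μ_i(β) = #{k ∈ Ris(β⁻¹) : k < i}`. -/
noncomputable def muStat {n : ℕ} (β : HO n) (i : ℕ) : ℕ := ((Ris (inv β)).filter fun k => k < i).card

/-- `ĝ_i(β) = 2 μ_{σ(i)}(β) + ε_i(β)`, where `σ(i) = |β(i)|`. -/
noncomputable def ghat {n : ℕ} (β : HO n) (i : ℕ) : ℕ :=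
  2 * muStat β (val β i).natAbs + epsStat β i

end HO

/-- The key used for the labelling (opposite-lexicographic) order on the cells of a
diagram `D : Fin n → ℕ × ℕ`: compare `b`, then `a`, then the index (to break ties). -/
noncomputable def okey {n : ℕ} (D : Fin n → ℕ × ℕ) (i : Fin n) : ℕ ×ₗ (ℕ ×ₗ ℕ) :=
  toLex ((D i).2, toLex ((D i).1, (i : ℕ)))

/-- The label of the `i`-th cell of `D` (cells listed in reading = lex order):
its rank in the opposite-lexicographic labelling order. -/
noncomputable def labelOf {n : ℕ} (D : Fin n → ℕ × ℕ) (i : Fin n) : ℕ :=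
  (Finset.univ.filter fun j : Fin n => okey D j ≤ okey D i).card

/-- The value at `i` of the classifying signed permutation `β(D)` of a diagram `D`
whose cells are listed in lex (reading) order: `β(D)(i) = (-1)^{a_i + 1} · label(i)`. -/
noncomputable def classifyVal {n : ℕ} (D : Fin n → ℕ × ℕ) (i : Fin n) : ℤ :=
  (if (D i).1 % 2 = 1 then 1 else -1) * (labelOf D i : ℤ)

/-- The compact `e`-diagram `D_β = (g(β), g̃(β))`, with cells listed in reading order:
the `i`-th cell is `(g_i(β), g_{σ(i)}(β⁻¹))` where `σ(i) = |β(i)|`. -/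
noncomputable def Dbeta {n : ℕ} (β : HO n) (i : Fin n) : ℕ × ℕ :=
  (HO.gstat β ((i : ℕ) + 1), HO.gstat (HO.inv β) (HO.val β ((i : ℕ) + 1)).natAbs)


section ProofAux

open HO Finset

variable {n : ℕ}

lemma val_fin (γ : HO n) (i : Fin n) :
    HO.val γ ((i:ℕ)+1) = if γ.2 i then -(((γ.1 i : Fin n):ℕ)+1 : ℤ)
      else (((γ.1 i : Fin n):ℕ)+1 : ℤ) := by
  unfold HO.val
  rw [dif_pos ⟨by omega, by omega⟩]
  simp

lemma natAbs_val_fin (γ : HO n) (i : Fin n) :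
    (HO.val γ ((i:ℕ)+1)).natAbs = ((γ.1 i : Fin n):ℕ)+1 := by
  rw [val_fin]; split <;> omega

lemma val_fin_pos_iff (γ : HO n) (i : Fin n) :
    0 < HO.val γ ((i:ℕ)+1) ↔ γ.2 i = false := by
  rw [val_fin]; split <;> simp_all <;> omega

lemma val_ne_zero (γ : HO n) {k : ℕ} (h1 : 1 ≤ k) (h2 : k ≤ n) :
    HO.val γ k ≠ 0 := by
  have hk : k - 1 < n := by omega
  have : k = ((⟨k-1, hk⟩ : Fin n) : ℕ) + 1 := by simp; omega
  rw [this, val_fin]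
  split <;> omega

lemma natAbs_val_inj (γ : HO n) {k l : ℕ} (h1 : 1 ≤ k) (h2 : k ≤ n)
    (h3 : 1 ≤ l) (h4 : l ≤ n) (h : (HO.val γ k).natAbs = (HO.val γ l).natAbs) :
    k = l := by
  have hk : k - 1 < n := by omega
  have hl : l - 1 < n := by omega
  have ek : k = ((⟨k-1, hk⟩ : Fin n) : ℕ) + 1 := by simp; omega
  have el : l = ((⟨l-1, hl⟩ : Fin n) : ℕ) + 1 := by simp; omega
  rw [ek, el, natAbs_val_fin, natAbs_val_fin] at h
  have : γ.1 ⟨k-1, hk⟩ = γ.1 ⟨l-1, hl⟩ := by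
    apply Fin.ext; omega
  have := γ.1.injective this
  have : k - 1 = l - 1 := congrArg Fin.val this
  omega

lemma bprec_total {a b : ℤ} (hab : a.natAbs ≠ b.natAbs) (ha : a ≠ 0) (hb : b ≠ 0)
    (h : ¬ HO.bprec b a) : HO.bprec a b := by
  unfold HO.bprec at *
  omega

lemma bprec_trans {a b c : ℤ} (h1 : HO.bprec a b) (h2 : HO.bprec b c) :
    HO.bprec a c := by
  unfold HO.bprec at *
  omega

lemma not_mem_Des {γ : HO n} {k : ℕ} (h1 : 1 ≤ k) (h2 : k ≤ n - 1)
    (h : k ∉ HO.Des γ) : ¬ HO.bprec (HO.val γ (k+1)) (HO.val γ k) := by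
  intro hc
  exact h (Finset.mem_filter.mpr ⟨Finset.mem_Icc.mpr ⟨h1, h2⟩, hc⟩)

lemma deltaStat_mono (γ : HO n) {s t : ℕ} (h : s ≤ t) :
    HO.deltaStat γ s ≤ HO.deltaStat γ t := by
  apply Finset.card_le_card
  intro x hx
  simp only [Finset.mem_filter] at hx ⊢
  exact ⟨hx.1, lt_of_lt_of_le hx.2 h⟩

lemma etaStat_le_one (γ : HO n) (k : ℕ) : HO.etaStat γ k ≤ 1 := by
  unfold HO.etaStat; split <;> omega

lemma deltaStat_succ_of_des {γ : HO n} {t : ℕ} (h : t ∈ HO.Des γ) :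
    HO.deltaStat γ t + 1 ≤ HO.deltaStat γ (t+1) := by
  unfold HO.deltaStat
  have hsub : insert t ((HO.Des γ).filter fun j => j < t) ⊆
      (HO.Des γ).filter fun j => j < t + 1 := by
    intro x hx
    simp only [Finset.mem_insert, Finset.mem_filter] at *
    rcases hx with rfl | hx
    · exact ⟨h, by omega⟩
    · exact ⟨hx.1, by omega⟩
  calc HO.deltaStat γ t + 1 = (insert t ((HO.Des γ).filter fun j => j < t)).card := by
        rw [Finset.card_insert_of_notMem]; · rfl
        · simp only [Finset.mem_filter]; omega
    _ ≤ _ := Finset.card_le_card hsub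

lemma gstat_step (γ : HO n) {t : ℕ} (h1 : 1 ≤ t) (h2 : t + 1 ≤ n) :
    HO.gstat γ t ≤ HO.gstat γ (t+1) := by
  unfold HO.gstat
  by_cases hd : t ∈ HO.Des γ
  · have h1 : HO.deltaStat γ t + 1 ≤ HO.deltaStat γ (t+1) := deltaStat_succ_of_des hd
    have h2 := etaStat_le_one γ t
    have h3 : 0 ≤ HO.etaStat γ (t+1) := Nat.zero_le _
    omega
  · have hmono : HO.deltaStat γ t ≤ HO.deltaStat γ (t+1) := deltaStat_mono γ (by omega)
    have heta : HO.etaStat γ t ≤ HO.etaStat γ (t+1) := by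
      unfold HO.etaStat
      split
      · next hp =>
        have hnd := not_mem_Des h1 (by omega) hd
        have hnz : HO.val γ (t+1) ≠ 0 := val_ne_zero γ (by omega) h2
        have : 0 < HO.val γ (t+1) := by
          by_contra hc
          push_neg at hc
          exact hnd (Or.inr (Or.inl ⟨by omega, by omega⟩))
        rw [if_pos this]
      · omega
    omega

lemma gstat_mono (γ : HO n) {s t : ℕ} (h1 : 1 ≤ s) (h2 : s ≤ t) (h3 : t ≤ n) :
    HO.gstat γ s ≤ HO.gstat γ t := by
  induction t with
  | zero => omega
  | succ u ih =>
    rcases Nat.lt_or_ge s (u+1) with h | h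
    · exact le_trans (ih (by omega) (by omega)) (gstat_step γ (by omega) h3)
    · have : s = u + 1 := by omega
      subst this; rfl

/-- chain lemma: no descents in `[s,u)` implies `val γ s ≺ val γ u`. -/
lemma bprec_chain (γ : HO n) {s u : ℕ} (h1 : 1 ≤ s) (hsu : s < u) (hun : u ≤ n)
    (hnd : ∀ k, s ≤ k → k < u → k ∉ HO.Des γ) :
    HO.bprec (HO.val γ s) (HO.val γ u) := by
  induction u with
  | zero => omega
  | succ v ih =>
    have hstep : HO.bprec (HO.val γ v) (HO.val γ (v+1)) := by
      have hv1 : 1 ≤ v := by omega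
      apply bprec_total
      · intro h
        have := natAbs_val_inj γ (by omega) (by omega) (by omega) hun h
        omega
      · exact val_ne_zero γ hv1 (by omega)
      · exact val_ne_zero γ (by omega) hun
      · exact not_mem_Des hv1 (by omega) (hnd v (by omega) (by omega))
    rcases Nat.lt_or_ge s v with h | h
    · exact bprec_trans (ih (by omega) (by omega) (fun k hk hk2 => hnd k hk (by omega))) hstep
    · have : s = v := by omega
      subst this; exact hstep

/-- delta counts descents below; equality of deltas means no descents in between. -/
lemma no_des_of_delta_eq {γ : HO n} {s u : ℕ} (hsu : s ≤ u)
    (h : HO.deltaStat γ s = HO.deltaStat γ u) :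
    ∀ k, s ≤ k → k < u → k ∉ HO.Des γ := by
  intro k hk1 hk2 hkd
  have h1 : HO.deltaStat γ (k+1) ≤ HO.deltaStat γ u := deltaStat_mono γ (by omega)
  have h2 : HO.deltaStat γ s ≤ HO.deltaStat γ k := deltaStat_mono γ hk1
  have := deltaStat_succ_of_des hkd
  omega


lemma Tdef (β : HO n) (i : Fin n) :
    (HO.val β ((i:ℕ)+1)).natAbs = ((β.1 i : Fin n):ℕ) + 1 := natAbs_val_fin β i

lemma val_inv_fin (β : HO n) (i : Fin n) :
    HO.val (HO.inv β) (((β.1 i : Fin n):ℕ) + 1)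
      = if β.2 i then -((i:ℕ)+1 : ℤ) else ((i:ℕ)+1 : ℤ) := by
  have h := val_fin (HO.inv β) (β.1 i)
  simp only [HO.inv, Equiv.Perm.inv_def, Equiv.symm_apply_apply] at h
  exact h

lemma key_lt (β : HO n) (i j : Fin n)
    (h : (HO.val β ((i:ℕ)+1)).natAbs < (HO.val β ((j:ℕ)+1)).natAbs) :
    okey (Dbeta β) i < okey (Dbeta β) j := by
  set s := (HO.val β ((i:ℕ)+1)).natAbs with hs
  set u := (HO.val β ((j:ℕ)+1)).natAbs with hu
  have hsi : s = ((β.1 i : Fin n):ℕ) + 1 := Tdef β i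
  have huj : u = ((β.1 j : Fin n):ℕ) + 1 := Tdef β j
  have hs1 : 1 ≤ s := by omega
  have hsn : s ≤ n := by have := (β.1 i).isLt; omega
  have hun : u ≤ n := by have := (β.1 j).isLt; omega
  have hg1 : HO.gstat (HO.inv β) s ≤ HO.gstat (HO.inv β) u :=
    gstat_mono _ hs1 (le_of_lt h) hun
  rw [okey, okey, Prod.Lex.lt_iff]
  simp only [Dbeta]
  rcases lt_or_eq_of_le hg1 with hlt | heq
  · left; exact hlt
  · right
    refine ⟨heq, ?_⟩
    -- extract delta and eta equalities
    have hdm : HO.deltaStat (HO.inv β) s ≤ HO.deltaStat (HO.inv β) u :=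
      deltaStat_mono _ (le_of_lt h)
    have hes := etaStat_le_one (HO.inv β) s
    have heu := etaStat_le_one (HO.inv β) u
    unfold HO.gstat at heq
    have hde : HO.deltaStat (HO.inv β) s = HO.deltaStat (HO.inv β) u := by omega
    have hee : HO.etaStat (HO.inv β) s = HO.etaStat (HO.inv β) u := by omega
    -- chain
    have hch : HO.bprec (HO.val (HO.inv β) s) (HO.val (HO.inv β) u) :=
      bprec_chain _ hs1 h hun (no_des_of_delta_eq (le_of_lt h) hde)
    -- sign agreement
    have hsign : (0 < HO.val (HO.inv β) s) ↔ (0 < HO.val (HO.inv β) u) := by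
      unfold HO.etaStat at hee
      split at hee <;> split at hee <;> first | tauto | omega
    -- values of inv
    have hvs := val_inv_fin β i
    have hvu := val_inv_fin β j
    rw [← hsi] at hvs
    rw [← huj] at hvu
    -- deduce i < j
    have hij : (i:ℕ) < (j:ℕ) := by
      cases hbi : β.2 i <;> cases hbj : β.2 j <;>
        simp only [hbi, hbj, if_true, if_false, Bool.true_eq_false, Bool.false_eq_true] at hvs hvu <;>
        rw [hvs, hvu] at hch hsign <;> unfold HO.bprec at hch <;> omega
    -- second coordinate
    have hg2 : HO.gstat β ((i:ℕ)+1) ≤ HO.gstat β ((j:ℕ)+1) :=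
      gstat_mono _ (by omega) (by omega) (by have := j.isLt; omega)
    rw [Prod.Lex.lt_iff]
    rcases lt_or_eq_of_le hg2 with hlt2 | heq2
    · left; exact hlt2
    · right; exact ⟨heq2, hij⟩

lemma T_inj (β : HO n) (i j : Fin n)
    (h : (HO.val β ((i:ℕ)+1)).natAbs = (HO.val β ((j:ℕ)+1)).natAbs) : i = j := by
  rw [Tdef, Tdef] at h
  exact β.1.injective (Fin.ext (by omega))

lemma key_le_iff (β : HO n) (i j : Fin n) :
    okey (Dbeta β) j ≤ okey (Dbeta β) i ↔
      (HO.val β ((j:ℕ)+1)).natAbs ≤ (HO.val β ((i:ℕ)+1)).natAbs := by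
  constructor
  · intro hle
    by_contra hc
    push_neg at hc
    exact absurd hle (not_le_of_gt (key_lt β i j hc))
  · intro hle
    rcases lt_or_eq_of_le hle with hlt | heq
    · exact le_of_lt (key_lt β j i hlt)
    · rw [T_inj β j i heq]

lemma card_filter_val_lt (k : ℕ) (hk : k ≤ n) (hn : 0 < n) :
    (Finset.univ.filter fun m : Fin n => (m:ℕ) < k).card = k := by
  have h : (Finset.univ.filter fun m : Fin n => (m:ℕ) < k).card = (Finset.range k).card := by
    apply Finset.card_nbij' (fun m : Fin n => (m:ℕ))
      (fun l => (⟨l % n, Nat.mod_lt _ hn⟩ : Fin n))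
    · intro a ha
      simp only [Finset.mem_coe, Finset.mem_filter, Finset.mem_univ, true_and] at ha
      simp [Finset.mem_range, ha]
    · intro a ha
      simp only [Finset.mem_coe, Finset.mem_range] at ha
      simp only [Finset.mem_coe, Finset.mem_filter, Finset.mem_univ, true_and]
      simpa [Nat.mod_eq_of_lt (show a < n by omega)] using ha
    · intro a _
      exact Fin.ext (Nat.mod_eq_of_lt a.isLt)
    · intro a ha
      simp only [Finset.mem_coe, Finset.mem_range] at ha
      simp [Nat.mod_eq_of_lt (show a < n by omega)]
  rw [h, Finset.card_range]

lemma labelOf_Dbeta (β : HO n) (i : Fin n) :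
    labelOf (Dbeta β) i = (HO.val β ((i:ℕ)+1)).natAbs := by
  unfold labelOf
  have hfc : (Finset.univ.filter fun j : Fin n => okey (Dbeta β) j ≤ okey (Dbeta β) i)
      = Finset.univ.filter fun j : Fin n =>
          (HO.val β ((j:ℕ)+1)).natAbs ≤ (HO.val β ((i:ℕ)+1)).natAbs := by
    apply Finset.filter_congr
    intro j _
    simp [key_le_iff β i j]
  rw [hfc]
  set k := (HO.val β ((i:ℕ)+1)).natAbs with hk
  have hfc2 : (Finset.univ.filter fun j : Fin n => (HO.val β ((j:ℕ)+1)).natAbs ≤ k)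
      = Finset.univ.filter fun j : Fin n => ((β.1 j : Fin n):ℕ) < k := by
    apply Finset.filter_congr
    intro j _
    rw [Tdef]
    omega
  rw [hfc2]
  have hkn : k ≤ n := by rw [hk, Tdef]; have := (β.1 i).isLt; omega
  have hcb : (Finset.univ.filter fun j : Fin n => ((β.1 j : Fin n):ℕ) < k).card
      = (Finset.univ.filter fun m : Fin n => (m:ℕ) < k).card := by
    apply Finset.card_nbij' (fun j => β.1 j) (fun m => β.1⁻¹ m) <;>
      simp [Finset.mem_filter, Set.MapsTo, Set.LeftInvOn, Set.RightInvOn]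
  rw [hcb, card_filter_val_lt k hkn i.pos]


end ProofAux

/-- the classifying signed permutation of the compact `e`-diagram `D_β`
is `β` itself: `β(D_β) = β`. -/
theorem classify_Dbeta (n : ℕ) (β : HO n) :
    ∀ i : Fin n, classifyVal (Dbeta β) i = HO.val β ((i : ℕ) + 1) := by
  intro i
  unfold classifyVal
  rw [labelOf_Dbeta]
  have hD1 : (Dbeta β i).1 = HO.gstat β ((i:ℕ)+1) := rfl
  rw [hD1]
  have heta : HO.gstat β ((i:ℕ)+1) % 2 = HO.etaStat β ((i:ℕ)+1) := by
    have := etaStat_le_one β ((i:ℕ)+1)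
    unfold HO.gstat
    omega
  rw [heta]
  unfold HO.etaStat
  have hnz : HO.val β ((i:ℕ)+1) ≠ 0 :=
    val_ne_zero β (by omega) (by have := i.isLt; omega)
  by_cases hp : 0 < HO.val β ((i:ℕ)+1)
  · rw [if_pos hp]
    simp
    omega
  · rw [if_neg hp]
    rw [if_neg (by omega : ¬ (0:ℕ) = 1)]
    omega
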